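/- Let S be a nearly Gorenstein numerical semigroup with minimal generators n_1 < n_2 < ... < n_ν and let (f_1, ..., f_ν) be an NG-vector for S. Then f_1 = F(S). -/
import Mathlib


/-- A numerical semigroup: a subset of ℕ containing 0, closed under addition,
with finite complement. -/
def IsNumSgp (S : Set ℕ) : Prop :=
  0 ∈ S ∧ (∀ a ∈ S, ∀ b ∈ S, a + b ∈ S) ∧ (Sᶜ : Set ℕ).Finite

/-- An integer belongs to (the image in ℤ of) S. -/
def memZ (S : Set ℕ) (z : ℤ) : Prop := ∃ s ∈ S, (s : ℤ) = z

/-- F is the Frobenius number of S: the largest natural number not in S. -/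
def IsFrob (S : Set ℕ) (F : ℕ) : Prop := F ∉ S ∧ ∀ n, F < n → n ∈ S

/-- The set of pseudo-Frobenius numbers of S. -/
def PF (S : Set ℕ) : Set ℕ := {f | f ∉ S ∧ ∀ s ∈ S, s ≠ 0 → f + s ∈ S}

/-- n is a minimal generator of S. -/
def IsMinGen (S : Set ℕ) (n : ℕ) : Prop :=
  n ∈ S ∧ n ≠ 0 ∧ ¬∃ a ∈ S, ∃ b ∈ S, a ≠ 0 ∧ b ≠ 0 ∧ a + b = n

/-- S is almost symmetric (Nari): F - f ∈ PF(S) for every f ∈ PF(S). -/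
def AlmostSym (S : Set ℕ) (F : ℕ) : Prop :=
  ∀ f ∈ PF S, ∃ g ∈ PF S, (g : ℤ) = (F : ℤ) - (f : ℤ)

/-- S is symmetric: PF(S) = {F(S)} (vacuously true when S = ℕ). -/
def IsSym (S : Set ℕ) : Prop := ∀ F, IsFrob S F → PF S = {F}

/-- (f_1,...,f_ν) is an NG-vector for S with minimal generators n_1,...,n_ν. -/
def IsNGVector {ν : ℕ} (S : Set ℕ) (n f : Fin ν → ℕ) : Prop :=
  ∀ i, f i ∈ PF S ∧ ∀ g ∈ PF S, memZ S ((n i : ℤ) + (f i : ℤ) - (g : ℤ))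

/-- S is nearly Gorenstein (generator criterion): for each minimal generator m
there is f ∈ PF(S) with m + f - g ∈ S for all g ∈ PF(S). -/
def NearlyGGen (S : Set ℕ) : Prop :=
  ∀ m, IsMinGen S m → ∃ f ∈ PF S, ∀ g ∈ PF S, memZ S ((m : ℤ) + (f : ℤ) - (g : ℤ))

/-- The canonical ideal K(S) = {z ∈ ℤ : F - z ∉ S}. -/
def Kan (S : Set ℕ) (F : ℕ) : Set ℤ := {z | ¬ memZ S ((F : ℤ) - z)}

/-- The relative ideal (S - K(S)) = {z ∈ ℤ : z + K(S) ⊆ S}. -/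
def SmK (S : Set ℕ) (F : ℕ) : Set ℤ := {z | ∀ k ∈ Kan S F, memZ S (z + k)}

/-- S is nearly Gorenstein: M(S) ⊆ K(S) + (S - K(S)). -/
def NearlyG (S : Set ℕ) (F : ℕ) : Prop :=
  ∀ m ∈ S, m ≠ 0 → ∃ k ∈ Kan S F, ∃ x ∈ SmK S F, k + x = (m : ℤ)

theorem stmt3 (ν : ℕ) (hν : 0 < ν) (S : Set ℕ) (F : ℕ) (n f : Fin ν → ℕ)
    (hS : IsNumSgp S) (hF : IsFrob S F) (hmono : StrictMono n)
    (hgen : ∀ m, IsMinGen S m ↔ ∃ i, n i = m)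
    (hNG : IsNGVector S n f) :
    f ⟨0, hν⟩ = F := by
  set i0 : Fin ν := ⟨0, hν⟩ with hi0
  have hn0gen : IsMinGen S (n i0) := (hgen (n i0)).mpr ⟨i0, rfl⟩
  have hn0S : n i0 ∈ S := hn0gen.1
  have hn0ne : n i0 ≠ 0 := hn0gen.2.1
  -- F ∈ PF S
  have hFPF : F ∈ PF S := by
    refine ⟨hF.1, fun s hs hs0 => hF.2 _ ?_⟩
    omega
  -- every nonzero element of S is ≥ n i0
  have hmin : ∀ t, t ∈ S → t ≠ 0 → n i0 ≤ t := by
    intro t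
    induction t using Nat.strong_induction_on with
    | _ t ih =>
      intro htS ht0
      by_contra hlt
      push_neg at hlt
      have htgen : IsMinGen S t := by
        refine ⟨htS, ht0, ?_⟩
        rintro ⟨a, haS, b, hbS, ha0, hb0, hab⟩
        have : n i0 ≤ a := ih a (by omega) haS ha0
        have : n i0 ≤ b := ih b (by omega) hbS hb0
        omega
      obtain ⟨i, hi⟩ := (hgen t).mp htgen
      have : n i0 ≤ n i := hmono.monotone (by simp [Fin.le_def, hi0])
      omega
  have hf0 := hNG i0
  obtain ⟨⟨hf0nS, hf0PF⟩, hf0mem⟩ := hf0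
  -- f i0 ≤ F
  have hfle : f i0 ≤ F := by
    by_contra h
    exact hf0nS (hF.2 _ (by omega))
  by_contra hne
  have hflt : f i0 < F := lt_of_le_of_ne hfle hne
  obtain ⟨s, hsS, hs⟩ := hf0mem F hFPF
  have hsne : s ≠ 0 := by
    intro h
    subst h
    have : n i0 + f i0 = F := by push_cast at hs; omega
    have : F ∈ S := by
      rw [← this, Nat.add_comm]
      exact hf0PF _ hn0S hn0ne
    exact hF.1 this
  have := hmin s hsS hsne
  omega
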